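/- Under the standing assumptions, for all interior squares Q = (i,j) and Q' = (i',j') of S, the broken H¹ inner product of the locally divergence-free elements satisfies: ⟨∇c_Q, ∇c_{Q'}⟩ = 20 if Q' = Q; ⟨∇c_Q, ∇c_{Q'}⟩ = −8 if (i'−i, j'−j) ∈ {(1,1),(1,−1),(−1,1),(−1,−1)}; ⟨∇c_Q, ∇c_{Q'}⟩ = 2 if (i'−i, j'−j) ∈ {(2,0),(−2,0),(0,2),(0,−2)}; ⟨∇c_Q, ∇c_{Q'}⟩ = 1 if (i'−i, j'−j) ∈ {(2,2),(2,−2),(−2,2),(−2,−2)}; and ⟨∇c_Q, ∇c_{Q'}⟩ = 0 in all other cases. -/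

import Mathlib

/-- The closed unit square `[i,i+1] × [j,j+1] ⊆ ℝ²` indexed by `q = (i,j) ∈ ℤ × ℤ`. -/
def unitSq (q : ℤ × ℤ) : Set (ℝ × ℝ) :=
  Set.Icc (q.1 : ℝ) (q.1 + 1) ×ˢ Set.Icc (q.2 : ℝ) (q.2 + 1)

/-- `Ω̄`, the union of the closed squares of the mesh `S`. -/
def meshRegion (S : Finset (ℤ × ℤ)) : Set (ℝ × ℝ) := ⋃ q ∈ S, unitSq q

/-- `v` is an interior vertex of `S`: all four grid squares having `v` as a corner belong
to `S`. -/
abbrev interiorVertex (S : Finset (ℤ × ℤ)) (v : ℤ × ℤ) : Prop :=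
  (v.1 - 1, v.2 - 1) ∈ S ∧ (v.1 - 1, v.2) ∈ S ∧ (v.1, v.2 - 1) ∈ S ∧ v ∈ S

/-- `v` is a mesh vertex of `S`: it is a corner of some square of `S`. -/
abbrev meshVertex (S : Finset (ℤ × ℤ)) (v : ℤ × ℤ) : Prop :=
  (v.1 - 1, v.2 - 1) ∈ S ∨ (v.1 - 1, v.2) ∈ S ∨ (v.1, v.2 - 1) ∈ S ∨ v ∈ S

/-- `v` is a boundary vertex of `S`: a mesh vertex which is not interior. -/
abbrev boundaryVertex (S : Finset (ℤ × ℤ)) (v : ℤ × ℤ) : Prop :=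
  meshVertex S v ∧ ¬ interiorVertex S v

/-- The four corners of the square indexed by `q`. -/
def cornersF (q : ℤ × ℤ) : Finset (ℤ × ℤ) :=
  {q, (q.1 + 1, q.2), (q.1, q.2 + 1), (q.1 + 1, q.2 + 1)}

/-- `q` is an interior square: all four of its corners are interior vertices. -/
abbrev interiorSquare (S : Finset (ℤ × ℤ)) (q : ℤ × ℤ) : Prop :=
  interiorVertex S q ∧ interiorVertex S (q.1 + 1, q.2) ∧
    interiorVertex S (q.1, q.2 + 1) ∧ interiorVertex S (q.1 + 1, q.2 + 1)

/-- The square `(i,j)` is red if `i + j` is even (and black otherwise). -/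
abbrev isRed (q : ℤ × ℤ) : Prop := (q.1 + q.2) % 2 = 0

/-- The standing assumptions on the mesh `S`: it is nonempty, `Ω` is connected and simply
connected, no square has four boundary corners, every grid edge shared by two squares of `S`
has an interior endpoint, and no square has exactly two boundary corners lying at diagonally
opposite corners. -/
structure Standing (S : Finset (ℤ × ℤ)) : Prop where
  nonempty : S.Nonempty
  connected : IsConnected (interior (meshRegion S))
  simplyConnected : SimplyConnectedSpace ↥(interior (meshRegion S))
  noFourBoundary : ∀ q ∈ S,
    ¬ (boundaryVertex S q ∧ boundaryVertex S (q.1 + 1, q.2) ∧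
        boundaryVertex S (q.1, q.2 + 1) ∧ boundaryVertex S (q.1 + 1, q.2 + 1))
  edgeH : ∀ v : ℤ × ℤ, v ∈ S → (v.1, v.2 - 1) ∈ S →
    interiorVertex S v ∨ interiorVertex S (v.1 + 1, v.2)
  edgeV : ∀ v : ℤ × ℤ, v ∈ S → (v.1 - 1, v.2) ∈ S →
    interiorVertex S v ∨ interiorVertex S (v.1, v.2 + 1)
  noDiagOne : ∀ q ∈ S,
    ¬ (boundaryVertex S q ∧ boundaryVertex S (q.1 + 1, q.2 + 1) ∧
        interiorVertex S (q.1 + 1, q.2) ∧ interiorVertex S (q.1, q.2 + 1))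
  noDiagTwo : ∀ q ∈ S,
    ¬ (boundaryVertex S (q.1 + 1, q.2) ∧ boundaryVertex S (q.1, q.2 + 1) ∧
        interiorVertex S q ∧ interiorVertex S (q.1 + 1, q.2 + 1))

/-- The discrete `x`-derivative `∂ˣc(Q)` of a scalar vertex function on the square `Q`. -/
def dX (c : ℤ × ℤ → ℝ) (q : ℤ × ℤ) : ℝ :=
  c (q.1 + 1, q.2) + c (q.1 + 1, q.2 + 1) - c (q.1, q.2) - c (q.1, q.2 + 1)

/-- The discrete `y`-derivative `∂ʸc(Q)` of a scalar vertex function on the square `Q`. -/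
def dY (c : ℤ × ℤ → ℝ) (q : ℤ × ℤ) : ℝ :=
  c (q.1, q.2 + 1) + c (q.1 + 1, q.2 + 1) - c (q.1, q.2) - c (q.1 + 1, q.2)

/-- The discrete divergence `(Dc)(Q) = ∂ˣc¹(Q) + ∂ʸc²(Q)`. -/
def Ddiv (c : ℤ × ℤ → ℝ × ℝ) (q : ℤ × ℤ) : ℝ :=
  dX (fun v => (c v).1) q + dY (fun v => (c v).2) q

/-- The discrete curl `(Cc)(Q) = ∂ˣc²(Q) − ∂ʸc¹(Q)`. -/
def Ccurl (c : ℤ × ℤ → ℝ × ℝ) (q : ℤ × ℤ) : ℝ :=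
  dX (fun v => (c v).2) q - dY (fun v => (c v).1) q

/-- The coefficient vector `c_Q` of the locally divergence-free element `Ψ_h^Q` attached to
the interior square `Q = (i,j)`: its only nonzero values are `c_Q(i+1,j+1) = (1/2,−1/2)`,
`c_Q(i,j+1) = (1/2,1/2)`, `c_Q(i,j) = (−1/2,1/2)` and `c_Q(i+1,j) = (−1/2,−1/2)`. -/
noncomputable def cQ (q : ℤ × ℤ) : (ℤ × ℤ) → ℝ × ℝ := fun v =>
  if v = (q.1 + 1, q.2 + 1) then (1 / 2, -(1 / 2))
  else if v = (q.1, q.2 + 1) then (1 / 2, 1 / 2)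
  else if v = q then (-(1 / 2), 1 / 2)
  else if v = (q.1 + 1, q.2) then (-(1 / 2), -(1 / 2))
  else (0, 0)

/-- `q'` is one of the four diagonal neighbors `(i±1, j±1)` of the square `q = (i,j)`. -/
abbrev diagNbr (q q' : ℤ × ℤ) : Prop :=
  (q'.1 - q.1 = 1 ∨ q'.1 - q.1 = -1) ∧ (q'.2 - q.2 = 1 ∨ q'.2 - q.2 = -1)

/-- The broken `H¹` inner product of the `P1`-nonconforming vector fields with coefficient
vectors `c` and `c'`:
`⟨∇c,∇c'⟩ = Σ_{Q∈S} [∂ˣc¹(Q)∂ˣc'¹(Q) + ∂ʸc¹(Q)∂ʸc'¹(Q) + ∂ˣc²(Q)∂ˣc'²(Q) + ∂ʸc²(Q)∂ʸc'²(Q)]`. -/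
noncomputable def innerH (S : Finset (ℤ × ℤ)) (c c' : (ℤ × ℤ) → ℝ × ℝ) : ℝ :=
  ∑ q ∈ S,
    (dX (fun v => (c v).1) q * dX (fun v => (c' v).1) q +
      dY (fun v => (c v).1) q * dY (fun v => (c' v).1) q +
      dX (fun v => (c v).2) q * dX (fun v => (c' v).2) q +
      dY (fun v => (c v).2) q * dY (fun v => (c' v).2) q)

private def nbhd0 : Finset (ℤ × ℤ) :=
  {(-1,-1),(-1,0),(-1,1),(0,-1),(0,0),(0,1),(1,-1),(1,0),(1,1)}

private def nbhd (i j : ℤ) : Finset (ℤ × ℤ) :=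
  nbhd0.image (fun p => (p.1 + i, p.2 + j))

private lemma memS {S : Finset (ℤ × ℤ)} {a b : ℤ} (h : (a, b) ∈ S) (a' b' : ℤ)
    (ha : a' = a) (hb : b' = b) : (a', b') ∈ S := by subst ha hb; exact h

private lemma cQ_tr (i j c1 c2 x y u v : ℤ) (hx : x = u + i) (hy : y = v + j) :
    cQ (c1 + i, c2 + j) (x, y) = cQ (c1, c2) (u, v) := by
  subst hx hy
  simp only [cQ, Prod.mk.injEq]
  split_ifs <;> first | rfl | omega

private lemma dX_tr (i j a b c1 c2 e1 e2 : ℤ) (f : ℝ × ℝ → ℝ)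
    (h1 : e1 = c1 + i) (h2 : e2 = c2 + j) :
    dX (fun v => f (cQ (e1, e2) v)) (a + i, b + j)
      = dX (fun v => f (cQ (c1, c2) v)) (a, b) := by
  subst h1 h2
  simp only [dX]
  rw [cQ_tr i j c1 c2 (a+i+1) (b+j) (a+1) b (by ring) rfl,
      cQ_tr i j c1 c2 (a+i+1) (b+j+1) (a+1) (b+1) (by ring) (by ring),
      cQ_tr i j c1 c2 (a+i) (b+j) a b rfl rfl,
      cQ_tr i j c1 c2 (a+i) (b+j+1) a (b+1) rfl (by ring)]

private lemma dY_tr (i j a b c1 c2 e1 e2 : ℤ) (f : ℝ × ℝ → ℝ)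
    (h1 : e1 = c1 + i) (h2 : e2 = c2 + j) :
    dY (fun v => f (cQ (e1, e2) v)) (a + i, b + j)
      = dY (fun v => f (cQ (c1, c2) v)) (a, b) := by
  subst h1 h2
  simp only [dY]
  rw [cQ_tr i j c1 c2 (a+i+1) (b+j) (a+1) b (by ring) rfl,
      cQ_tr i j c1 c2 (a+i+1) (b+j+1) (a+1) (b+1) (by ring) (by ring),
      cQ_tr i j c1 c2 (a+i) (b+j) a b rfl rfl,
      cQ_tr i j c1 c2 (a+i) (b+j+1) a (b+1) rfl (by ring)]

private lemma d_out (c1 c2 a b : ℤ)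
    (h : a + 1 < c1 ∨ c1 + 1 < a ∨ b + 1 < c2 ∨ c2 + 1 < b) :
    dX (fun v => (cQ (c1,c2) v).1) (a,b) = 0 ∧ dY (fun v => (cQ (c1,c2) v).1) (a,b) = 0 ∧
    dX (fun v => (cQ (c1,c2) v).2) (a,b) = 0 ∧ dY (fun v => (cQ (c1,c2) v).2) (a,b) = 0 := by
  have z : ∀ x y : ℤ, (x = a ∨ x = a+1) → (y = b ∨ y = b+1) → cQ (c1,c2) (x,y) = (0,0) := by
    intro x y hx hy
    simp only [cQ, Prod.mk.injEq]
    split_ifs <;> first | rfl | omega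
  have z1 := z a b (Or.inl rfl) (Or.inl rfl)
  have z2 := z (a+1) b (Or.inr rfl) (Or.inl rfl)
  have z3 := z a (b+1) (Or.inl rfl) (Or.inr rfl)
  have z4 := z (a+1) (b+1) (Or.inr rfl) (Or.inr rfl)
  refine ⟨?_, ?_, ?_, ?_⟩ <;> simp [dX, dY, z1, z2, z3, z4]

private lemma sum_nbhd0 (g : ℤ × ℤ → ℝ) :
    ∑ p ∈ nbhd0, g p =
      g (-1,-1) + g (-1,0) + g (-1,1) + g (0,-1) + g (0,0) + g (0,1) +
        g (1,-1) + g (1,0) + g (1,1) := by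
  rw [show nbhd0 = {(-1,-1),(-1,0),(-1,1),(0,-1),(0,0),(0,1),(1,-1),(1,0),(1,1)} from rfl]
  rw [Finset.sum_insert (by decide), Finset.sum_insert (by decide),
    Finset.sum_insert (by decide), Finset.sum_insert (by decide),
    Finset.sum_insert (by decide), Finset.sum_insert (by decide),
    Finset.sum_insert (by decide), Finset.sum_insert (by decide),
    Finset.sum_singleton]
  ring

private lemma mem_nbhd (i j a b : ℤ) :
    (a, b) ∈ nbhd i j ↔ (i - 1 ≤ a ∧ a ≤ i + 1 ∧ j - 1 ≤ b ∧ b ≤ j + 1) := by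
  simp only [nbhd, nbhd0, Finset.mem_image, Finset.mem_insert, Finset.mem_singleton,
    Prod.mk.injEq, Prod.exists]
  constructor
  · rintro ⟨p1, p2, hp, h1, h2⟩
    omega
  · intro hb
    exact ⟨a - i, b - j, by omega, by omega, by omega⟩

set_option maxHeartbeats 4000000 in
/-- Under the standing assumptions, for all interior squares `Q = (i,j)` and
`Q' = (i',j')` of `S`, the broken `H¹` inner product of the locally divergence-free elements
satisfies: `⟨∇c_Q, ∇c_{Q'}⟩ = 20` if `Q' = Q`; `= −8` if `(i'−i, j'−j) ∈ {(±1,±1)}`;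
`= 2` if `(i'−i, j'−j) ∈ {(±2,0),(0,±2)}`; `= 1` if `(i'−i, j'−j) ∈ {(±2,±2)}`; and `= 0` in
all other cases. -/
theorem innerH_cQ_values (S : Finset (ℤ × ℤ)) (h : Standing S)
    (Q Q' : ℤ × ℤ) (hQ : Q ∈ S) (hQint : interiorSquare S Q)
    (hQ' : Q' ∈ S) (hQ'int : interiorSquare S Q') :
    innerH S (cQ Q) (cQ Q') =
      if Q' = Q then 20
      else if (Q'.1 - Q.1, Q'.2 - Q.2) ∈
          ({(1, 1), (1, -1), (-1, 1), (-1, -1)} : Finset (ℤ × ℤ)) then -8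
      else if (Q'.1 - Q.1, Q'.2 - Q.2) ∈
          ({(2, 0), (-2, 0), (0, 2), (0, -2)} : Finset (ℤ × ℤ)) then 2
      else if (Q'.1 - Q.1, Q'.2 - Q.2) ∈
          ({(2, 2), (2, -2), (-2, 2), (-2, -2)} : Finset (ℤ × ℤ)) then 1
      else 0 := by
  classical
  clear h hQ hQ' hQ'int
  obtain ⟨i, j⟩ := Q
  obtain ⟨i', j'⟩ := Q'
  obtain ⟨d1, rfl⟩ : ∃ d, i' = d + i := ⟨i' - i, by ring⟩
  obtain ⟨d2, rfl⟩ : ∃ d, j' = d + j := ⟨j' - j, by ring⟩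
  obtain ⟨⟨m1, m2, m3, m4⟩, ⟨m5, m6, m7, m8⟩, ⟨m9, m10, m11, m12⟩, ⟨m13, m14, m15, m16⟩⟩ :=
    hQint
  have M : ∀ a b : ℤ, i - 1 ≤ a → a ≤ i + 1 → j - 1 ≤ b → b ≤ j + 1 → (a, b) ∈ S := by
    intro a b ha1 ha2 hb1 hb2
    have hA : a = i - 1 ∨ a = i ∨ a = i + 1 := by omega
    have hB : b = j - 1 ∨ b = j ∨ b = j + 1 := by omega
    rcases hA with rfl | rfl | rfl <;> rcases hB with rfl | rfl | rfl
    · exact memS m1 _ _ (by omega) (by omega)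
    · exact memS m2 _ _ (by omega) (by omega)
    · exact memS m10 _ _ (by omega) (by omega)
    · exact memS m3 _ _ (by omega) (by omega)
    · exact memS m4 _ _ (by omega) (by omega)
    · exact memS m12 _ _ (by omega) (by omega)
    · exact memS m7 _ _ (by omega) (by omega)
    · exact memS m8 _ _ (by omega) (by omega)
    · exact memS m16 _ _ (by omega) (by omega)
  have hsub : nbhd i j ⊆ S := by
    intro q hq
    obtain ⟨a, b⟩ := q
    rw [mem_nbhd] at hq
    exact M a b (by omega) (by omega) (by omega) (by omega)
  have hz : ∀ q ∈ S, q ∉ nbhd i j →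
      (dX (fun v => (cQ (i, j) v).1) q * dX (fun v => (cQ (d1 + i, d2 + j) v).1) q +
        dY (fun v => (cQ (i, j) v).1) q * dY (fun v => (cQ (d1 + i, d2 + j) v).1) q +
        dX (fun v => (cQ (i, j) v).2) q * dX (fun v => (cQ (d1 + i, d2 + j) v).2) q +
        dY (fun v => (cQ (i, j) v).2) q * dY (fun v => (cQ (d1 + i, d2 + j) v).2) q) = 0 := by
    intro q _ hq
    obtain ⟨a, b⟩ := q
    rw [mem_nbhd] at hq
    obtain ⟨z1, z2, z3, z4⟩ := d_out i j a b (by omega)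
    rw [z1, z2, z3, z4]
    ring
  rw [innerH, ← Finset.sum_subset hsub hz, nbhd, Finset.sum_image (by
    intro x hx y hy hxy
    obtain ⟨x1, x2⟩ := x
    obtain ⟨y1, y2⟩ := y
    simp only [Prod.mk.injEq] at hxy ⊢
    omega)]
  have step : ∀ p ∈ nbhd0,
      (dX (fun v => (cQ (i, j) v).1) (p.1 + i, p.2 + j) *
          dX (fun v => (cQ (d1 + i, d2 + j) v).1) (p.1 + i, p.2 + j) +
        dY (fun v => (cQ (i, j) v).1) (p.1 + i, p.2 + j) *
          dY (fun v => (cQ (d1 + i, d2 + j) v).1) (p.1 + i, p.2 + j) +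
        dX (fun v => (cQ (i, j) v).2) (p.1 + i, p.2 + j) *
          dX (fun v => (cQ (d1 + i, d2 + j) v).2) (p.1 + i, p.2 + j) +
        dY (fun v => (cQ (i, j) v).2) (p.1 + i, p.2 + j) *
          dY (fun v => (cQ (d1 + i, d2 + j) v).2) (p.1 + i, p.2 + j)) =
      (dX (fun v => (cQ ((0 : ℤ), (0 : ℤ)) v).1) p * dX (fun v => (cQ (d1, d2) v).1) p +
        dY (fun v => (cQ ((0 : ℤ), (0 : ℤ)) v).1) p * dY (fun v => (cQ (d1, d2) v).1) p +
        dX (fun v => (cQ ((0 : ℤ), (0 : ℤ)) v).2) p * dX (fun v => (cQ (d1, d2) v).2) p +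
        dY (fun v => (cQ ((0 : ℤ), (0 : ℤ)) v).2) p * dY (fun v => (cQ (d1, d2) v).2) p) := by
    intro p _
    obtain ⟨a, b⟩ := p
    dsimp only
    rw [dX_tr i j a b 0 0 i j Prod.fst (by ring) (by ring),
      dY_tr i j a b 0 0 i j Prod.fst (by ring) (by ring),
      dX_tr i j a b 0 0 i j Prod.snd (by ring) (by ring),
      dY_tr i j a b 0 0 i j Prod.snd (by ring) (by ring),
      dX_tr i j a b d1 d2 (d1 + i) (d2 + j) Prod.fst rfl rfl,
      dY_tr i j a b d1 d2 (d1 + i) (d2 + j) Prod.fst rfl rfl,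
      dX_tr i j a b d1 d2 (d1 + i) (d2 + j) Prod.snd rfl rfl,
      dY_tr i j a b d1 d2 (d1 + i) (d2 + j) Prod.snd rfl rfl]
  rw [Finset.sum_congr rfl step]
  simp only [Prod.mk.injEq, add_sub_cancel_right, add_eq_right, Finset.mem_insert,
    Finset.mem_singleton]
  by_cases hfar : d1 < -2 ∨ 2 < d1 ∨ d2 < -2 ∨ 2 < d2
  · have hL : ∀ p ∈ nbhd0,
        (dX (fun v => (cQ ((0 : ℤ), (0 : ℤ)) v).1) p * dX (fun v => (cQ (d1, d2) v).1) p +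
          dY (fun v => (cQ ((0 : ℤ), (0 : ℤ)) v).1) p * dY (fun v => (cQ (d1, d2) v).1) p +
          dX (fun v => (cQ ((0 : ℤ), (0 : ℤ)) v).2) p * dX (fun v => (cQ (d1, d2) v).2) p +
          dY (fun v => (cQ ((0 : ℤ), (0 : ℤ)) v).2) p * dY (fun v => (cQ (d1, d2) v).2) p)
          = 0 := by
      intro p hp
      obtain ⟨a, b⟩ := p
      have hab : -1 ≤ a ∧ a ≤ 1 ∧ -1 ≤ b ∧ b ≤ 1 := by
        simp only [nbhd0, Finset.mem_insert, Finset.mem_singleton, Prod.mk.injEq] at hp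
        omega
      obtain ⟨z1, z2, z3, z4⟩ := d_out d1 d2 a b (by omega)
      rw [z1, z2, z3, z4]
      ring
    rw [Finset.sum_eq_zero hL]
    split_ifs with h1 h2 h3 h4 <;> first | rfl | (exfalso; omega)
  · push_neg at hfar
    obtain ⟨hb1, hb2, hb3, hb4⟩ : -2 ≤ d1 ∧ d1 ≤ 2 ∧ -2 ≤ d2 ∧ d2 ≤ 2 := by omega
    rw [sum_nbhd0]
    interval_cases d1 <;> interval_cases d2 <;>
      norm_num [dX, dY, cQ, Prod.ext_iff]
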